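/- Let α ∈ R^d with Q_n a sequence of positive integers satisfying Q_{n+1} ≥ 2Q_n and ‖Q_n α‖_Z ≤ 1/(n^{2d+3} Q_n^{1/d}) for all n ≥ 1. Set R_n = n^{-2} Q_n^{-1/d} and U_n = n^{2d} Q_n. Then for every x₀ ∈ T^d and every n ≥ 1: ⋃_{l=0}^{U_n−1} T_α^{-l} B(x₀, R_n) ⊆ ⋃_{l=0}^{Q_n−1} T_α^{-l} B(x₀, 2R_n), and consequently μ(⋃_{l=0}^{U_n−1} T_α^{-l} B(x₀, R_n)) ≤ C/n^{2d} for a constant C depending only on d. -/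

import Mathlib

open MeasureTheory Filter Metric ENNReal Topology


/-- `‖v‖_ℤ`: the maximum over coordinates of the distance of `v i` to the nearest integer,
realized as the sup-distance to `0` in the torus `ℝ^d/ℤ^d`. -/
noncomputable def normZ {d : ℕ} (v : Fin d → ℝ) : ℝ :=
  dist (fun i => ((v i : ℝ) : AddCircle (1:ℝ))) (0 : Fin d → AddCircle (1:ℝ))

private lemma iterate_add_const {G : Type*} [AddCommGroup G] (c : G) (l : ℕ) (y : G) :
    (fun z => z + c)^[l] y = y + l • c := by
  induction l with
  | zero => simp
  | succ k ih => rw [Function.iterate_succ_apply', ih, succ_nsmul, add_assoc]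

/-- Section 2.4 estimate: the union of the first `U_n = n^{2d}Q_n` preimages of the ball of
radius `R_n = n^{-2}Q_n^{-1/d}` is contained in the union of the first `Q_n` preimages of
the doubled ball, hence has measure at most `C/n^{2d}`. -/
theorem stmt14 (d : ℕ) (hd : 0 < d) :
    ∃ C : ℝ, 0 < C ∧ ∀ α : Fin d → ℝ, ∀ Q : ℕ → ℕ, (∀ n, 1 ≤ Q n) →
      (∀ n, 1 ≤ n → 2 * Q n ≤ Q (n+1)) →
      (∀ n, 1 ≤ n → normZ (fun i => (Q n : ℝ) * α i) ≤
        1 / ((n : ℝ)^(2*d+3) * (Q n : ℝ) ^ ((1:ℝ)/(d:ℝ)))) →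
      ∀ x₀ : Fin d → AddCircle (1:ℝ), ∀ n : ℕ, 1 ≤ n →
        ((⋃ l ∈ Finset.range (n^(2*d) * Q n),
            (fun y => y + fun i => ((α i : ℝ) : AddCircle (1:ℝ)))^[l] ⁻¹'
              ball x₀ ((n : ℝ)^(-(2:ℝ)) * (Q n : ℝ) ^ (-(1:ℝ)/(d:ℝ)))) ⊆
          ⋃ l ∈ Finset.range (Q n),
            (fun y => y + fun i => ((α i : ℝ) : AddCircle (1:ℝ)))^[l] ⁻¹'
              ball x₀ (2 * ((n : ℝ)^(-(2:ℝ)) * (Q n : ℝ) ^ (-(1:ℝ)/(d:ℝ))))) ∧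
        volume (⋃ l ∈ Finset.range (n^(2*d) * Q n),
            (fun y => y + fun i => ((α i : ℝ) : AddCircle (1:ℝ)))^[l] ⁻¹'
              ball x₀ ((n : ℝ)^(-(2:ℝ)) * (Q n : ℝ) ^ (-(1:ℝ)/(d:ℝ))))
          ≤ ENNReal.ofReal (C / (n : ℝ)^(2*d)) := by
  refine ⟨4^d, by positivity, ?_⟩
  intro α Q hQ1 _hQ2 hQα x₀ n hn
  set c : Fin d → AddCircle (1:ℝ) := fun i => ((α i : ℝ) : AddCircle (1:ℝ)) with hc
  have hQn : 0 < Q n := hQ1 n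
  set A : ℝ := (n : ℝ) with hA
  set B : ℝ := (Q n : ℝ) with hB
  have hA1 : 1 ≤ A := by rw [hA]; exact_mod_cast hn
  have hA0 : 0 < A := lt_of_lt_of_le one_pos hA1
  have hB0 : 0 < B := by rw [hB]; exact_mod_cast hQn
  set R : ℝ := A ^ (-(2:ℝ)) * B ^ (-(1:ℝ)/(d:ℝ)) with hR
  set P : ℝ := B ^ ((1:ℝ)/(d:ℝ)) with hP
  have hP0 : 0 < P := Real.rpow_pos_of_pos hB0 _
  have hRval : R = 1 / (A ^ (2:ℕ) * P) := by
    rw [hR, hP, show (-(2:ℝ)) = -((2:ℕ):ℝ) by norm_num, Real.rpow_neg hA0.le,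
      Real.rpow_natCast, neg_div, Real.rpow_neg hB0.le]
    field_simp
  have hR0 : 0 < R := by rw [hRval]; positivity
  -- the key smallness bound
  have hnormc : ‖(Q n) • c‖ = normZ (fun i => (Q n : ℝ) * α i) := by
    rw [normZ, dist_zero_right]
    congr 1
    funext i
    simp only [hc, Pi.smul_apply, ← AddCircle.coe_nsmul, nsmul_eq_mul]
  have hkey : (A ^ (2*d)) * ‖(Q n) • c‖ ≤ R := by
    rw [hnormc]
    have h1 := hQα n hn
    have h2 : A ^ (2*d) * normZ (fun i => (Q n : ℝ) * α i) ≤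
        A ^ (2*d) * (1 / (A ^ (2*d+3) * P)) := by
      have hnz : 0 ≤ normZ (fun i => (Q n : ℝ) * α i) := by
        rw [normZ]; exact dist_nonneg
      exact mul_le_mul_of_nonneg_left h1 (by positivity)
    refine h2.trans ?_
    rw [hRval]
    rw [show (2*d+3) = (2*d) + 3 from rfl, pow_add]
    rw [mul_one_div, div_le_div_iff₀ (by positivity) (by positivity), one_mul]
    have h3 : A ^ (2:ℕ) ≤ A ^ (3:ℕ) := pow_le_pow_right₀ hA1 (by norm_num)
    calc A ^ (2*d) * (A ^ (2:ℕ) * P) = (A ^ (2*d) * P) * A ^ (2:ℕ) := by ring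
      _ ≤ (A ^ (2*d) * P) * A ^ (3:ℕ) := by
            exact mul_le_mul_of_nonneg_left h3 (by positivity)
      _ = A ^ (2*d) * A ^ (3:ℕ) * P := by ring
  -- the inclusion
  have hincl : (⋃ l ∈ Finset.range (n^(2*d) * Q n),
      (fun y => y + c)^[l] ⁻¹' ball x₀ R) ⊆
      ⋃ l ∈ Finset.range (Q n), (fun y => y + c)^[l] ⁻¹' ball x₀ (2 * R) := by
    intro y hy
    simp only [Set.mem_iUnion, Finset.mem_range, Set.mem_preimage] at hy ⊢
    obtain ⟨l, hl, hyl⟩ := hy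
    refine ⟨l % Q n, Nat.mod_lt _ hQn, ?_⟩
    rw [iterate_add_const] at hyl ⊢
    rw [mem_ball] at hyl ⊢
    have hdecomp : l • c = (l % Q n) • c + ((l / Q n) * Q n) • c := by
      rw [← add_nsmul]
      congr 1
      exact (Nat.mod_add_div' l (Q n)).symm
    have hk : l / Q n ≤ n ^ (2*d) := by
      have := (Nat.div_lt_iff_lt_mul hQn).mpr (by omega : l < n ^ (2*d) * Q n)
      omega
    calc dist (y + (l % Q n) • c) x₀
        ≤ dist (y + (l % Q n) • c) (y + l • c) + dist (y + l • c) x₀ :=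
          dist_triangle _ _ _
      _ < dist (y + (l % Q n) • c) (y + l • c) + R := by linarith
      _ ≤ R + R := by
          have : dist (y + (l % Q n) • c) (y + l • c) ≤ R := by
            rw [dist_add_left, hdecomp, dist_self_add_right]
            have h1 : ‖((l / Q n) * Q n) • c‖ ≤ ((l / Q n : ℕ) : ℝ) * ‖(Q n) • c‖ := by
              rw [mul_comm (l / Q n) (Q n), mul_nsmul]
              exact norm_nsmul_le
            have h2 : ((l / Q n : ℕ) : ℝ) * ‖(Q n) • c‖ ≤ (A ^ (2*d)) * ‖(Q n) • c‖ := by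
              have : ((l / Q n : ℕ) : ℝ) ≤ A ^ (2*d) := by
                calc ((l / Q n : ℕ) : ℝ) ≤ ((n ^ (2*d) : ℕ) : ℝ) := by exact_mod_cast hk
                  _ = A ^ (2*d) := by rw [hA]; push_cast; ring
              exact mul_le_mul_of_nonneg_right this (norm_nonneg _)
            linarith [hkey]
          linarith
      _ = 2 * R := by ring
  refine ⟨hincl, ?_⟩
  -- measure estimate
  have hmp : ∀ l : ℕ, MeasurePreserving ((fun y : Fin d → AddCircle (1:ℝ) => y + c)^[l])
      volume volume := by
    intro l
    have : (fun y : Fin d → AddCircle (1:ℝ) => y + c)^[l] = fun y => y + l • c := by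
      funext y; exact iterate_add_const c l y
    rw [this]
    exact measurePreserving_add_right volume (l • c)
  have hball : volume (ball x₀ (2 * R)) ≤ ENNReal.ofReal ((4 * R)^d) := by
    have h1 : volume (ball x₀ (2 * R)) ≤ volume (closedBall x₀ (2 * R)) :=
      measure_mono ball_subset_closedBall
    rw [volume_pi_closedBall x₀ (by positivity)] at h1
    refine h1.trans ?_
    have h2 : ∀ i : Fin d, volume (closedBall (x₀ i) (2 * R)) ≤ ENNReal.ofReal (4 * R) := by
      intro i
      rw [AddCircle.volume_closedBall]
      exact ENNReal.ofReal_le_ofReal (by rw [min_le_iff]; right; linarith)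
    calc ∏ i : Fin d, volume (closedBall (x₀ i) (2 * R))
        ≤ ∏ _i : Fin d, ENNReal.ofReal (4 * R) := Finset.prod_le_prod' fun i _ => h2 i
      _ = (ENNReal.ofReal (4 * R))^d := by simp
      _ = ENNReal.ofReal ((4 * R)^d) := by
          rw [ENNReal.ofReal_pow (by positivity)]
  have hsum : volume (⋃ l ∈ Finset.range (Q n), (fun y => y + c)^[l] ⁻¹' ball x₀ (2 * R))
      ≤ (Q n : ℝ≥0∞) * ENNReal.ofReal ((4 * R)^d) := by
    refine (measure_biUnion_finset_le _ _).trans ?_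
    have : ∀ l ∈ Finset.range (Q n),
        volume ((fun y => y + c)^[l] ⁻¹' ball x₀ (2 * R)) ≤ ENNReal.ofReal ((4 * R)^d) := by
      intro l _
      rw [(hmp l).measure_preimage measurableSet_ball.nullMeasurableSet]
      exact hball
    refine (Finset.sum_le_sum this).trans ?_
    simp [Finset.card_range]
  have hfinal : (Q n : ℝ≥0∞) * ENNReal.ofReal ((4 * R)^d) ≤
      ENNReal.ofReal ((4:ℝ)^d / A^(2*d)) := by
    rw [← ENNReal.ofReal_natCast (Q n), ← ENNReal.ofReal_mul (by positivity)]
    refine ENNReal.ofReal_le_ofReal ?_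
    have hRd : R ^ d = (A ^ (2*d))⁻¹ * B⁻¹ := by
      rw [hR, mul_pow]
      congr 1
      · rw [← Real.rpow_natCast (A ^ (-(2:ℝ))) d, ← Real.rpow_mul hA0.le,
          show (-(2:ℝ)) * (d:ℝ) = -((2*d : ℕ) : ℝ) by push_cast; ring,
          Real.rpow_neg hA0.le, Real.rpow_natCast]
      · rw [← Real.rpow_natCast (B ^ (-(1:ℝ)/(d:ℝ))) d, ← Real.rpow_mul hB0.le,
          show (-(1:ℝ)/(d:ℝ)) * (d:ℝ) = -1 by
            field_simp,
          Real.rpow_neg_one]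
    have : (Q n : ℝ) * (4 * R)^d = (4:ℝ)^d / A^(2*d) := by
      rw [mul_pow, hRd, ← hB]
      field_simp
    rw [this]
  refine le_trans (measure_mono hincl) (hsum.trans (hfinal.trans ?_))
  exact le_of_eq (by rw [hA])
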